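/- arXiv:2308.10796 — 3 statements merged into one kernel-verified Lean document; each statement's English description precedes it below -/
import Mathlib

section
/- Let a > 0, C ≥ 0, t₀ ∈ ℝ, and let f be a complex-valued function that is holomorphic and nonvanishing on an open set containing the closed disc {z ∈ ℂ : |z − t₀| ≤ a}, and let F be a holomorphic branch of the logarithm of f on this disc (i.e., exp(F(z)) = f(z) there). If |log |f(z)|| ≤ C for all z with |z − t₀| ≤ a, then for every integer m ≥ 1 the m-th complex derivative of F satisfies |F⁽ᵐ⁾(t₀)| ≤ 3 · 2ᵐ · m! · C / aᵐ. -/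
open Complex Metric

/-- Cauchy-estimate-type bound on the derivatives of a holomorphic branch
`F` of the logarithm of a nonvanishing holomorphic function `f`, given the bound
`|log |f|| ≤ C` on a closed disc of radius `a` around the real point `t₀`. -/
theorem log_branch_iteratedDeriv_bound
    (a C : ℝ) (ha : 0 < a) (hC : 0 ≤ C) (t₀ : ℝ)
    (f F : ℂ → ℂ) (U : Set ℂ) (hU : IsOpen U)
    (hball : closedBall (t₀ : ℂ) a ⊆ U)
    (hf : DifferentiableOn ℂ f U)
    (hf0 : ∀ z ∈ U, f z ≠ 0)
    (hF : DifferentiableOn ℂ F U)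
    (hFf : ∀ z ∈ closedBall (t₀ : ℂ) a, Complex.exp (F z) = f z)
    (hbound : ∀ z ∈ closedBall (t₀ : ℂ) a, |Real.log (‖f z‖)| ≤ C)
    (m : ℕ) (hm : 1 ≤ m) :
    ‖iteratedDeriv m F (t₀ : ℂ)‖ ≤ 3 * 2 ^ m * m.factorial * C / a ^ m := by
  obtain ⟨k, rfl⟩ : ∃ k, m = k + 1 := ⟨m - 1, (Nat.succ_pred_eq_of_pos hm).symm⟩
  set c : ℂ := (t₀ : ℂ) with hc
  have hFc : ContinuousOn F (closedBall c a) := (hF.mono hball).continuousOn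
  -- power series expansion
  have hps := (hF.mono hball).hasFPowerSeriesOnBall (R := ⟨a, ha.le⟩)
    (by exact_mod_cast ha)
  -- derivative = factorial • coefficient
  have hder : iteratedDeriv (k+1) F c
      = (k+1).factorial • (cauchyPowerSeries F c a (k+1) fun _ => (1:ℂ)) := by
    rw [iteratedDeriv_eq_iteratedFDeriv, ← hps.factorial_smul (1:ℂ) (k+1)]
    rfl
  -- coefficient as circle integral
  have hcoeff : (cauchyPowerSeries F c a (k+1) fun _ => (1:ℂ))
      = (2 * ↑Real.pi * I : ℂ)⁻¹ • ∮ z in C(c, a), (z - c)⁻¹ ^ (k+1) • (z - c)⁻¹ • F z := by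
    simp [cauchyPowerSeries, ContinuousMultilinearMap.mkPiRing_apply]
  -- Cauchy-Goursat : ∮ (z-c)^k * F z = 0
  have hJ : (∮ z in C(c, a), (z - c) ^ k * F z) = 0 := by
    refine circleIntegral_eq_zero_of_differentiable_on_off_countable ha.le
      Set.countable_empty ?_ ?_
    · exact (ContinuousOn.pow (by fun_prop) k).mul hFc
    · intro z hz
      exact ((differentiableAt_id.sub (differentiableAt_const c)).pow k).mul
        (hF.differentiableAt (hU.mem_nhds (hball (ball_subset_closedBall hz.1))))
  -- parametrized version
  have hK : (∫ θ in (0:ℝ)..2*Real.pi, (circleMap 0 a θ)^(k+1) * F (circleMap c a θ)) = 0 := by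
    have h1 : (∮ z in C(c, a), (z - c) ^ k * F z)
        = I * ∫ θ in (0:ℝ)..2*Real.pi, (circleMap 0 a θ)^(k+1) * F (circleMap c a θ) := by
      rw [circleIntegral, ← intervalIntegral.integral_const_mul]
      refine intervalIntegral.integral_congr fun θ _ => ?_
      simp only [deriv_circleMap, circleMap_sub_center, smul_eq_mul, pow_succ]
      ring
    rw [hJ] at h1
    have := h1.symm
    rcases mul_eq_zero.mp this with h | h
    · exact absurd h I_ne_zero
    · exact h
  -- the conjugate integral vanishes
  have hB : (∮ z in C(c, a), (z - c)⁻¹ ^ (k+2) * (starRingEnd ℂ) (F z)) = 0 := by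
    have h1 : (∮ z in C(c, a), (z - c)⁻¹ ^ (k+2) * (starRingEnd ℂ) (F z))
        = I * ((((a:ℂ))^2) ^ (k+1))⁻¹ * (starRingEnd ℂ)
            (∫ θ in (0:ℝ)..2*Real.pi, (circleMap 0 a θ)^(k+1) * F (circleMap c a θ)) := by
      rw [circleIntegral]
      have hpt : ∀ θ ∈ Set.uIcc (0:ℝ) (2*Real.pi),
          deriv (circleMap c a) θ • ((circleMap c a θ - c)⁻¹ ^ (k+2)
              * (starRingEnd ℂ) (F (circleMap c a θ)))
          = I * ((((a:ℂ))^2)^(k+1))⁻¹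
              * (starRingEnd ℂ) ((circleMap 0 a θ)^(k+1) * F (circleMap c a θ)) := by
        intro θ _
        have hz : circleMap 0 a θ ≠ 0 := circleMap_ne_center ha.ne'
        have hzz : circleMap 0 a θ * (starRingEnd ℂ) (circleMap 0 a θ) = ((a:ℂ))^2 := by
          rw [Complex.mul_conj]; norm_cast
          simp [Complex.normSq_eq_norm_sq, norm_circleMap_zero, abs_of_pos ha]
        have hconj : (starRingEnd ℂ) (circleMap 0 a θ) = (a:ℂ)^2 / circleMap 0 a θ := by
          field_simp [← hzz]
          linear_combination hzz
        simp only [deriv_circleMap, circleMap_sub_center, smul_eq_mul]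
        rw [map_mul, map_pow, hconj]
        have hA : ((a:ℂ)) ≠ 0 := by exact_mod_cast ha.ne'
        field_simp
        rw [show circleMap 0 a θ * (1 / circleMap 0 a θ) ^ (k + 2) = (circleMap 0 a θ * (1 / circleMap 0 a θ)) * (1 / circleMap 0 a θ) ^ (k + 1) by ring, mul_one_div_cancel hz, one_mul]
        ring
      rw [intervalIntegral.integral_congr hpt, intervalIntegral.integral_const_mul,
        intervalIntegral.integral_of_le Real.two_pi_pos.le, integral_conj,
        ← intervalIntegral.integral_of_le (μ := MeasureTheory.volume) Real.two_pi_pos.le]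
    rw [h1, hK, map_zero, mul_zero]
  -- integrability of the two pieces on the circle
  have hzc : ∀ z ∈ sphere c a, z - c ≠ 0 := by
    intro z hz h
    rw [sub_eq_zero] at h
    subst h
    simp only [mem_sphere, dist_self] at hz
    exact ha.ne hz
  have hcontinv : ContinuousOn (fun z : ℂ => (z - c)⁻¹ ^ (k+2)) (sphere c a) :=
    (((continuous_id.sub continuous_const).continuousOn).inv₀ hzc).pow _
  have hint1 : CircleIntegrable (fun z => (z - c)⁻¹ ^ (k+2) * (2 * (((F z).re : ℝ) : ℂ))) c a := by
    refine ContinuousOn.circleIntegrable ha.le ?_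
    exact hcontinv.mul (continuousOn_const.mul
      ((Complex.continuous_ofReal.comp Complex.continuous_re).comp_continuousOn
        (hFc.mono sphere_subset_closedBall)))
  have hint2 : CircleIntegrable (fun z => (z - c)⁻¹ ^ (k+2) * (starRingEnd ℂ) (F z)) c a := by
    refine ContinuousOn.circleIntegrable ha.le ?_
    exact hcontinv.mul (Complex.continuous_conj.comp_continuousOn
      (hFc.mono sphere_subset_closedBall))
  -- split the main integral, using hB
  have hsplit : (∮ z in C(c, a), (z - c)⁻¹ ^ (k+1) • (z - c)⁻¹ • F z)
      = ∮ z in C(c, a), (z - c)⁻¹ ^ (k+2) * (2 * (((F z).re : ℝ) : ℂ)) := by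
    have heq : Set.EqOn (fun z => (z - c)⁻¹ ^ (k+1) • (z - c)⁻¹ • F z)
        (fun z => (z - c)⁻¹ ^ (k+2) * (2 * (((F z).re : ℝ) : ℂ))
          - (z - c)⁻¹ ^ (k+2) * (starRingEnd ℂ) (F z)) (sphere c a) := by
      intro z _
      have h2re : 2 * (((F z).re : ℝ) : ℂ) = F z + (starRingEnd ℂ) (F z) := by
        rw [Complex.add_conj]; push_cast; ring
      simp only [smul_eq_mul, pow_succ]
      rw [h2re]
      ring
    rw [circleIntegral.integral_congr ha.le heq, circleIntegral.integral_sub hint1 hint2,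
      hB, sub_zero]
  -- bound the real-part integral
  have hbnd : ‖∮ z in C(c, a), (z - c)⁻¹ ^ (k+2) * (2 * (((F z).re : ℝ) : ℂ))‖
      ≤ 2 * Real.pi * a * (2 * C / a ^ (k+2)) := by
    refine circleIntegral.norm_integral_le_of_norm_le_const ha.le fun z hz => ?_
    have hza : ‖z - c‖ = a := by
      simpa [Complex.dist_eq] using (mem_sphere.mp hz)
    have hzball : z ∈ closedBall c a := sphere_subset_closedBall hz
    have habs : ‖f z‖ = Real.exp (F z).re := by
      rw [← hFf z hzball, Complex.norm_exp]
    have hre : |(F z).re| ≤ C := by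
      have h := hbound z hzball
      rwa [habs, Real.log_exp] at h
    have hval : ‖(z - c)⁻¹ ^ (k+2) * (2 * (((F z).re : ℝ) : ℂ))‖
        = (a ^ (k+2))⁻¹ * (2 * |(F z).re|) := by
      simp [map_mul, map_pow, map_inv₀, hza, Complex.norm_real,
        Complex.norm_two]
    rw [hval]
    calc (a ^ (k+2))⁻¹ * (2 * |(F z).re|) ≤ (a ^ (k+2))⁻¹ * (2 * C) := by
          gcongr
      _ = 2 * C / a ^ (k+2) := by ring
  -- put everything together
  have habsfact : ∀ X : ℂ, ‖(k+1).factorial • ((2 * (Real.pi:ℂ) * I)⁻¹ • X)‖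
      = (k+1).factorial * ((2 * Real.pi)⁻¹ * ‖X‖) := by
    intro X
    simp [nsmul_eq_mul, smul_eq_mul, map_mul, map_inv₀, Complex.norm_two, Complex.norm_I,
      Complex.norm_real, abs_of_pos Real.pi_pos]
  rw [hder, hcoeff, hsplit, habsfact]
  have hnorm : ‖∮ z in C(c, a), (z - c)⁻¹ ^ (k+2) * (2 * (((F z).re : ℝ) : ℂ))‖
      ≤ 2 * Real.pi * a * (2 * C / a ^ (k+2)) := by
    simpa using hbnd
  have hfactnn : (0:ℝ) ≤ ((k+1).factorial : ℝ) := Nat.cast_nonneg _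
  calc ((k+1).factorial : ℝ) * ((2 * Real.pi)⁻¹
        * ‖∮ z in C(c, a), (z - c)⁻¹ ^ (k+2) * (2 * (((F z).re : ℝ) : ℂ))‖)
      ≤ (k+1).factorial * ((2 * Real.pi)⁻¹ * (2 * Real.pi * a * (2 * C / a ^ (k+2)))) := by
        gcongr
    _ = 2 * (k+1).factorial * C / a ^ (k+1) := by
        have hπ : Real.pi ≠ 0 := Real.pi_ne_zero
        field_simp
        ring
    _ ≤ 3 * 2 ^ (k+1) * (k+1).factorial * C / a ^ (k+1) := by
        have h1 : (1:ℝ) ≤ 2 ^ (k+1) := one_le_pow₀ (by norm_num)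
        have h2 : (2:ℝ) * (k+1).factorial * C ≤ 3 * 2 ^ (k+1) * (k+1).factorial * C := by
          nlinarith [mul_nonneg hfactnn hC]
        gcongr
end

section
/- Let a > 0, C ≥ 0, t₀ ∈ ℝ, and let f be holomorphic and nonvanishing on an open set containing the closed disc {z ∈ ℂ : |z − t₀| ≤ a}, with |log |f(z)|| ≤ C on this disc. Let F be a holomorphic branch of the logarithm of f on the disc and let φ(t) = Im F(t) for real t near t₀. Then for every integer m ≥ 1, |dᵐφ/dtᵐ (t₀)| ≤ 3 · 2ᵐ · m! · C / aᵐ. -/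
open Complex Metric MeasureTheory

set_option maxHeartbeats 1000000


lemma intervalIntegral_conj {f : ℝ → ℂ} {a b : ℝ} :
    ∫ x in a..b, (starRingEnd ℂ) (f x) = (starRingEnd ℂ) (∫ x in a..b, f x) := by
  simp [intervalIntegral, ← integral_conj, map_sub]

lemma conj_circleIntegral_zero {F : ℂ → ℂ} {U : Set ℂ} (hU : IsOpen U) {c : ℂ} {a : ℝ}
    (ha : 0 < a) (hsub : closedBall c a ⊆ U) (hF : DifferentiableOn ℂ F U)
    (m : ℕ) (hm : 1 ≤ m) :
    (∮ z in C(c, a), (starRingEnd ℂ) (F z) / (z - c) ^ (m + 1)) = 0 := by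
  obtain ⟨k, rfl⟩ : ∃ k, m = k + 1 := ⟨m - 1, (Nat.succ_pred_eq_of_pos hm).symm⟩
  have h0 : (∮ z in C(c, a), F z * (z - c) ^ k) = 0 := by
    apply circleIntegral_eq_zero_of_differentiable_on_off_countable ha.le Set.countable_empty
    · exact (hF.continuousOn.mono hsub).mul ((continuousOn_id.sub continuousOn_const).pow k)
    · intro z hz
      exact ((hF.differentiableAt (hU.mem_nhds (hsub (ball_subset_closedBall hz.1)))).mul
        ((differentiableAt_id.sub_const c).pow k))
  have key : ∀ θ : ℝ, deriv (circleMap c a) θ •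
        ((starRingEnd ℂ) (F (circleMap c a θ)) / (circleMap c a θ - c) ^ (k + 1 + 1))
      = (-(((a : ℂ) ^ (2 * (k + 1)))⁻¹)) *
        (starRingEnd ℂ) (deriv (circleMap c a) θ • (F (circleMap c a θ) * (circleMap c a θ - c) ^ k)) := by
    intro θ
    have hw : circleMap 0 a θ ≠ 0 := circleMap_ne_center (ne_of_gt ha)
    have hsub' : circleMap c a θ - c = circleMap 0 a θ := by simp [circleMap]
    have hconj : (starRingEnd ℂ) (circleMap 0 a θ) = (a : ℂ) ^ 2 / circleMap 0 a θ := by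
      rw [eq_div_iff hw, mul_comm, Complex.mul_conj]
      norm_cast
      simp [Complex.normSq_apply, circleMap]
      ring_nf
      rw [← mul_add, Real.cos_sq_add_sin_sq]   -- may not match; fix later
      ring
    rw [deriv_circleMap, hsub']
    set w := circleMap 0 a θ
    set g := (starRingEnd ℂ) (F (circleMap c a θ))
    simp only [smul_eq_mul, map_mul, map_pow, Complex.conj_I, hconj]
    have ha2 : ((a:ℂ) ^ (2 * (k+1))) ≠ 0 := pow_ne_zero _ (Complex.ofReal_ne_zero.mpr (ne_of_gt ha))
    field_simp
    rw [div_pow, mul_div_assoc', eq_div_iff (pow_ne_zero _ hw)]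
    simp only [g]
    ring
  calc (∮ z in C(c, a), (starRingEnd ℂ) (F z) / (z - c) ^ (k + 1 + 1))
      = ∫ θ in (0:ℝ)..2 * Real.pi, (-(((a : ℂ) ^ (2 * (k + 1)))⁻¹)) *
        (starRingEnd ℂ) (deriv (circleMap c a) θ • (F (circleMap c a θ) * (circleMap c a θ - c) ^ k)) := by
        rw [circleIntegral]; exact intervalIntegral.integral_congr fun θ _ => key θ
    _ = (-(((a : ℂ) ^ (2 * (k + 1)))⁻¹)) * (starRingEnd ℂ) (∮ z in C(c, a), F z * (z - c) ^ k) := by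
        rw [intervalIntegral.integral_const_mul, intervalIntegral_conj]; rfl
    _ = 0 := by rw [h0, map_zero, mul_zero]



lemma complex_deriv_bound {F : ℂ → ℂ} {U : Set ℂ} (hU : IsOpen U) {c : ℂ} {a C : ℝ}
    (ha : 0 < a) (hC : 0 ≤ C) (hsub : closedBall c a ⊆ U) (hF : DifferentiableOn ℂ F U)
    (hre : ∀ z ∈ closedBall c a, |(F z).re| ≤ C) (m : ℕ) (hm : 1 ≤ m) :
    ‖iteratedDeriv m F c‖ ≤ 2 * m.factorial * C / a ^ m := by
  set R : NNReal := ⟨a, ha.le⟩ with hR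
  have hRa : (R : ℝ) = a := rfl
  have hball : HasFPowerSeriesOnBall F (cauchyPowerSeries F c R) c R :=
    DifferentiableOn.hasFPowerSeriesOnBall (hF.mono (by rw [hRa]; exact hsub))
      (NNReal.coe_pos.mp ha)
  have hiter : iteratedDeriv m F c = m.factorial • (cauchyPowerSeries F c R m fun _ => (1:ℂ)) := by
    rw [iteratedDeriv_eq_iteratedFDeriv, ← hball.factorial_smul (1:ℂ) m]
  rw [cauchyPowerSeries_apply] at hiter
  set I₁ : ℂ → ℂ := fun z => ((F z).re : ℂ) / (z - c) ^ (m + 1) with hI₁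
  set I₂ : ℂ → ℂ := fun z => (starRingEnd ℂ) (F z) / (z - c) ^ (m + 1) with hI₂
  have hFcont : ContinuousOn F (sphere c a) :=
    (hF.continuousOn.mono hsub).mono sphere_subset_closedBall
  have hpowne : ∀ z ∈ sphere c a, (z - c) ^ (m + 1) ≠ 0 := by
    intro z hz
    apply pow_ne_zero
    rw [mem_sphere_iff_norm] at hz
    intro h; rw [h] at hz; simp at hz; exact ha.ne hz
  have hpowcont : ContinuousOn (fun z => (z - c) ^ (m+1)) (sphere c a) :=
    ((continuous_id.sub continuous_const).pow (m+1)).continuousOn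
  have hint1 : CircleIntegrable I₁ c a := by
    apply ContinuousOn.circleIntegrable ha.le
    exact ContinuousOn.div (Complex.continuous_ofReal.comp_continuousOn
      (Complex.continuous_re.comp_continuousOn hFcont)) hpowcont hpowne
  have hint2 : CircleIntegrable I₂ c a := by
    apply ContinuousOn.circleIntegrable ha.le
    exact ContinuousOn.div (Complex.continuous_conj.comp_continuousOn hFcont) hpowcont hpowne
  have hint1' : CircleIntegrable (fun z => (2:ℂ) • I₁ z) c a := by
    apply ContinuousOn.circleIntegrable ha.le
    exact (ContinuousOn.smul (f := fun _ => (2:ℂ)) (g := I₁) continuousOn_const (ContinuousOn.div (Complex.continuous_ofReal.comp_continuousOn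
      (Complex.continuous_re.comp_continuousOn hFcont)) hpowcont hpowne))
  have hsplit : (∮ z in C(c, (R:ℝ)), ((1:ℂ) / (z - c)) ^ m • (z - c)⁻¹ • F z)
      = (2:ℂ) • (∮ z in C(c, a), I₁ z) := by
    rw [hRa]
    have hcongr : (∮ z in C(c, a), ((1:ℂ) / (z - c)) ^ m • (z - c)⁻¹ • F z)
        = ∮ z in C(c, a), ((2:ℂ) • I₁ z - I₂ z) := by
      apply circleIntegral.integral_congr ha.le
      intro z hz
      have hzc : z - c ≠ 0 := by
        rw [mem_sphere_iff_norm] at hz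
        intro h; rw [h] at hz; simp at hz; exact ha.ne hz
      simp only [hI₁, hI₂, smul_eq_mul]
      set r : ℝ := (F z).re with hr
      set u : ℂ := (starRingEnd ℂ) (F z) with hu
      have hFz : F z = 2 * (r : ℂ) - u := by
        have h2 := Complex.add_conj (F z)
        rw [← hu, ← hr] at h2
        push_cast at h2
        linear_combination h2
      rw [hFz]
      field_simp
      rw [one_div, inv_pow, pow_succ]
      field_simp
    rw [hcongr, circleIntegral.integral_sub hint1' hint2,
      circleIntegral.integral_smul, conj_circleIntegral_zero hU ha hsub hF m hm, sub_zero]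
  rw [hsplit] at hiter
  have hval : iteratedDeriv m F c
      = ((m.factorial : ℂ) * (2 * ↑Real.pi * Complex.I)⁻¹ * 2) • (∮ z in C(c, a), I₁ z) := by
    rw [hiter, smul_comm ((2 * (Real.pi:ℂ) * Complex.I)⁻¹) ((2:ℂ))]
    rw [← Nat.cast_smul_eq_nsmul ℂ]
    simp only [smul_smul, smul_eq_mul]
    ring
  have hI₁bound : ‖(∮ z in C(c, a), I₁ z)‖ ≤ 2 * Real.pi * a * (C / a ^ (m+1)) := by
    apply circleIntegral.norm_integral_le_of_norm_le_const ha.le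
    intro z hz
    have hza : ‖z - c‖ = a := mem_sphere_iff_norm.mp hz
    have : ‖I₁ z‖ = |(F z).re| / a ^ (m+1) := by
      simp only [hI₁, norm_div, norm_pow, hza, Complex.norm_real, Real.norm_eq_abs]
    rw [this]
    apply div_le_div_of_nonneg_right ?_ (by positivity) |>.trans_eq rfl
    · exact hre z (sphere_subset_closedBall hz)
  calc ‖iteratedDeriv m F c‖
      = ((m.factorial : ℝ) * (2 * Real.pi)⁻¹ * 2) * ‖(∮ z in C(c, a), I₁ z)‖ := by
        rw [hval, norm_smul]
        congr 1
        rw [norm_mul, norm_mul, norm_inv, norm_mul, norm_mul]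
        simp [Complex.norm_I, Complex.norm_natCast, Real.norm_eq_abs,
          _root_.abs_of_nonneg Real.pi_pos.le]
    _ ≤ ((m.factorial : ℝ) * (2 * Real.pi)⁻¹ * 2) * (2 * Real.pi * a * (C / a ^ (m+1))) := by
        apply mul_le_mul_of_nonneg_left hI₁bound
        positivity
    _ = 2 * m.factorial * C / a ^ m := by
        have hπ : Real.pi ≠ 0 := Real.pi_ne_zero
        have haz : a ≠ 0 := ha.ne'
        field_simp
        ring


/-- second half of Lemma 1 of the paper. For a nonvanishing holomorphic
function `f` on a neighborhood of the closed disc of radius `a` around the real point `t₀`,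
with `|log |f|| ≤ C` on the disc, and a holomorphic branch `F` of the logarithm of `f`
with phase `φ(t) = Im F(t)`, the `m`-th real-time derivative of the phase at `t₀` is
bounded by `3 · 2^m · m! · C / a^m`. -/
theorem real_time_deriv_phase_bound
    (a C : ℝ) (ha : 0 < a) (hC : 0 ≤ C) (t₀ : ℝ)
    (f F : ℂ → ℂ) (U : Set ℂ) (hU : IsOpen U)
    (hball : closedBall (t₀ : ℂ) a ⊆ U)
    (hf : DifferentiableOn ℂ f U)
    (hf0 : ∀ z ∈ U, f z ≠ 0)
    (hF : DifferentiableOn ℂ F U)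
    (hFf : ∀ z ∈ closedBall (t₀ : ℂ) a, Complex.exp (F z) = f z)
    (hbound : ∀ z ∈ closedBall (t₀ : ℂ) a, |Real.log ‖f z‖| ≤ C)
    (m : ℕ) (hm : 1 ≤ m) :
    |iteratedDeriv m (fun t : ℝ => (F (t : ℂ)).im) t₀|
      ≤ 3 * 2 ^ m * m.factorial * C / a ^ m := by

  have hAn : ∀ n : ℕ, AnalyticOnNhd ℂ (iteratedDeriv n F) U := by
    intro n
    induction n with
    | zero => simpa [iteratedDeriv_zero] using hF.analyticOnNhd hU
    | succ n ih => rw [iteratedDeriv_succ]; exact ih.deriv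
  have him : ∀ n : ℕ, ∀ t : ℝ, (t : ℂ) ∈ U →
      iteratedDeriv n (fun s : ℝ => (F (s : ℂ)).im) t = (iteratedDeriv n F (t : ℂ)).im := by
    intro n
    induction n with
    | zero => intro t _; simp
    | succ n ih =>
      intro t ht
      rw [iteratedDeriv_succ]
      have hV : (fun s : ℝ => iteratedDeriv n (fun s : ℝ => (F (s : ℂ)).im) s)
          =ᶠ[nhds t] fun s : ℝ => (iteratedDeriv n F (s : ℂ)).im := by
        have hmem : {s : ℝ | (s : ℂ) ∈ U} ∈ nhds t :=
          (hU.preimage Complex.continuous_ofReal).mem_nhds ht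
        filter_upwards [hmem] with s hs using ih s hs
      rw [hV.deriv_eq]
      have hd : HasDerivAt (fun s : ℝ => iteratedDeriv n F (s : ℂ))
          (iteratedDeriv (n + 1) F (t : ℂ)) t := by
        have h1 : DifferentiableAt ℂ (iteratedDeriv n F) (t : ℂ) :=
          ((hAn n) _ ht).differentiableAt
        have h2 := h1.hasDerivAt
        rw [show deriv (iteratedDeriv n F) (t : ℂ) = iteratedDeriv (n + 1) F (t : ℂ) by
          rw [iteratedDeriv_succ]] at h2
        exact h2.comp_ofReal
      have him' : HasDerivAt (fun s : ℝ => (iteratedDeriv n F (s : ℂ)).im)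
          ((iteratedDeriv (n + 1) F (t : ℂ)).im) t := by
        exact Complex.imCLM.hasFDerivAt.comp_hasDerivAt t hd
      exact him'.deriv
  have ht₀U : ((t₀ : ℂ)) ∈ U := hball (mem_closedBall_self ha.le)
  have hreF : ∀ z ∈ closedBall (t₀ : ℂ) a, |(F z).re| ≤ C := by
    intro z hz
    have hlog : Real.log ‖f z‖ = (F z).re := by
      rw [← hFf z hz, Complex.norm_exp, Real.log_exp]
    rw [← hlog]
    exact hbound z hz
  rw [him m t₀ ht₀U]
  have h1 : |(iteratedDeriv m F (t₀ : ℂ)).im| ≤ ‖iteratedDeriv m F (t₀ : ℂ)‖ :=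
    Complex.abs_im_le_norm _
  have h2 := complex_deriv_bound hU ha hC hball hF hreF m hm
  refine (h1.trans h2).trans ?_
  have hfac : (1 : ℝ) ≤ (m.factorial : ℝ) := by exact_mod_cast m.factorial_pos
  have hpow : (1 : ℝ) ≤ 2 ^ m := one_le_pow₀ (by norm_num)
  gcongr
  nlinarith
end

section
/- Under the setup of the previous statement (unit vector ψ ∈ ℂⁿ, Hermitian matrices H₁, …, H_Γ with H = Σⱼ Hⱼ, Hermitian Bⱼ with Bⱼ ψ = −i (Hⱼ ψ − ⟨ψ, Hⱼ ψ⟩ ψ), and cⱼ(h) = √(⟨ψ, exp(−2hHⱼ) ψ⟩)), let v ∈ ℂⁿ satisfy ⟨v, ψ⟩ ≠ 0. Then the functions h ↦ log |⟨v, exp(−h H) ψ⟩| and h ↦ log |⟨v, (∏ⱼ cⱼ(h)) exp(−ihB₁) ⋯ exp(−ihB_Γ) ψ⟩| are differentiable at h = 0 and have equal derivatives there. -/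
open Complex Matrix NormedSpace

/-! Auxiliary lemmas -/

theorem hasDerivAt_log_abs_aux {f : ℝ → ℂ} {w d : ℂ} (hw : w ≠ 0) (hf0 : f 0 = w)
    (hf : HasDerivAt f d 0) :
    HasDerivAt (fun h => Real.log (norm (f h)))
      (((starRingEnd ℂ) w * d).re / Complex.normSq w) 0 := by
  have hre : HasDerivAt (fun h => (f h).re) d.re 0 :=
    Complex.reCLM.hasFDerivAt.comp_hasDerivAt 0 hf
  have him : HasDerivAt (fun h => (f h).im) d.im 0 :=
    Complex.imCLM.hasFDerivAt.comp_hasDerivAt 0 hf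
  have hsq : HasDerivAt (fun h => Complex.normSq (f h))
      (2 * (w.re * d.re + w.im * d.im)) 0 := by
    have h1 := (hre.mul hre).add (him.mul him)
    have h2 : (fun h => Complex.normSq (f h)) =
        fun h => (f h).re * (f h).re + (f h).im * (f h).im := by
      funext h; simp [Complex.normSq_apply]
    rw [h2]
    refine HasDerivAt.congr_deriv h1 ?_
    rw [hf0]; ring
  have hns : Complex.normSq (f 0) ≠ 0 := by
    rw [hf0]; exact (Complex.normSq_pos.2 hw).ne'
  have hlog : HasDerivAt (fun h => Real.log (Complex.normSq (f h)))
      ((Complex.normSq (f 0))⁻¹ * (2 * (w.re * d.re + w.im * d.im))) 0 :=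
    by have := (Real.hasDerivAt_log hns).comp 0 hsq; exact this
  have heq : (fun h => Real.log (norm (f h))) =
      fun h => Real.log (Complex.normSq (f h)) / 2 := by
    funext h
    rw [Complex.norm_def, Real.log_sqrt (Complex.normSq_nonneg _)]
  rw [heq]
  have := hlog.div_const 2
  refine this.congr_deriv ?_
  rw [hf0]
  rw [Complex.mul_re]
  simp [Complex.conj_re, Complex.conj_im]
  field_simp

theorem listProd_hasDerivAt_aux {A : Type*} [NormedRing A] [NormedAlgebra ℝ A]
    (l : List ((ℝ → A) × A)) (hl : ∀ p ∈ l, HasDerivAt p.1 p.2 0 ∧ p.1 0 = 1) :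
    HasDerivAt (fun h => (l.map fun p => p.1 h).prod) (l.map Prod.snd).sum 0 ∧
      (l.map fun p => p.1 0).prod = 1 := by
  induction l with
  | nil => exact ⟨by simpa using hasDerivAt_const (0:ℝ) (1:A), by simp⟩
  | cons p l ih =>
    obtain ⟨hd, hv⟩ := hl p (List.mem_cons_self)
    obtain ⟨ihd, ihv⟩ := ih fun q hq => hl q (List.mem_cons_of_mem _ hq)
    refine ⟨?_, by simp [hv, ihv]⟩
    simp only [List.map_cons, List.prod_cons, List.sum_cons]
    have := hd.mul ihd
    rw [ihv, hv] at this
    simp at this; exact this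

section MatAux

attribute [local instance] Matrix.linftyOpNormedAddCommGroup Matrix.linftyOpNormedRing
  Matrix.linftyOpNormedAlgebra

variable {n : ℕ}

noncomputable def overlapCLM (v ψ : Fin n → ℂ) : Matrix (Fin n) (Fin n) ℂ →L[ℝ] ℂ :=
  LinearMap.toContinuousLinearMap
    { toFun := fun M => star v ⬝ᵥ M.mulVec ψ
      map_add' := fun M N => by simp [Matrix.add_mulVec, dotProduct_add]
      map_smul' := fun r M => by
        simp [Matrix.smul_mulVec, dotProduct_smul] }

theorem hasDerivAt_exp_coe_smul (C : Matrix (Fin n) (Fin n) ℂ) :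
    HasDerivAt (fun h : ℝ => NormedSpace.exp ((h : ℂ) • C)) C 0 := by
  have heq : (fun h : ℝ => NormedSpace.exp ((h : ℂ) • C)) =
      fun h : ℝ => NormedSpace.exp (h • C) := by
    funext h
    rw [Complex.coe_smul]
  rw [heq]
  have := hasDerivAt_exp_smul_const (𝕂 := ℝ) C (0 : ℝ)
  simp at this; exact this

theorem hasDerivAt_overlap (v ψ : Fin n → ℂ) (C : Matrix (Fin n) (Fin n) ℂ) :
    HasDerivAt (fun h : ℝ => star v ⬝ᵥ (NormedSpace.exp ((h : ℂ) • C)).mulVec ψ)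
      (star v ⬝ᵥ C.mulVec ψ) 0 := by
  have h := (overlapCLM v ψ).hasFDerivAt.comp_hasDerivAt 0 (hasDerivAt_exp_coe_smul C)
  exact h

theorem hasDerivAt_overlap_listProd (v ψ : Fin n → ℂ) {Γ : ℕ}
    (B : Fin Γ → Matrix (Fin n) (Fin n) ℂ) :
    HasDerivAt (fun h : ℝ => star v ⬝ᵥ ((List.ofFn fun j : Fin Γ =>
        NormedSpace.exp ((-(Complex.I * (h : ℂ))) • B j)).prod.mulVec ψ))
      (star v ⬝ᵥ (∑ j : Fin Γ, (-Complex.I) • B j).mulVec ψ) 0 := by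
  have hfact : ∀ j : Fin Γ, HasDerivAt
      (fun h : ℝ => NormedSpace.exp ((-(Complex.I * (h : ℂ))) • B j))
      ((-Complex.I) • B j) 0 := by
    intro j
    have heq : (fun h : ℝ => NormedSpace.exp ((-(Complex.I * (h : ℂ))) • B j)) =
        fun h : ℝ => NormedSpace.exp ((h : ℂ) • ((-Complex.I) • B j)) := by
      funext h
      rw [smul_smul]
      ring_nf
    rw [heq]
    exact hasDerivAt_exp_coe_smul _
  set l : List ((ℝ → Matrix (Fin n) (Fin n) ℂ) × Matrix (Fin n) (Fin n) ℂ) :=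
    List.ofFn (fun j : Fin Γ =>
      (fun h : ℝ => NormedSpace.exp ((-(Complex.I * (h : ℂ))) • B j), (-Complex.I) • B j))
    with hl
  have hmem : ∀ p ∈ l, HasDerivAt p.1 p.2 0 ∧ p.1 0 = 1 := by
    intro p hp
    rw [hl, List.mem_ofFn] at hp
    obtain ⟨j, rfl⟩ := hp
    refine ⟨hfact j, ?_⟩
    simp [NormedSpace.exp_zero]
  obtain ⟨hP, _⟩ := listProd_hasDerivAt_aux l hmem
  have hmap : ∀ h : ℝ, (l.map fun p => p.1 h) =
      List.ofFn (fun j : Fin Γ => NormedSpace.exp ((-(Complex.I * (h : ℂ))) • B j)) := by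
    intro h; rw [hl, List.map_ofFn]; rfl
  have hsum : (l.map Prod.snd).sum = ∑ j : Fin Γ, (-Complex.I) • B j := by
    rw [hl, List.map_ofFn]; exact List.sum_ofFn
  rw [hsum] at hP
  have hP' : HasDerivAt (fun h : ℝ => (List.ofFn fun j : Fin Γ =>
      NormedSpace.exp ((-(Complex.I * (h : ℂ))) • B j)).prod)
      (∑ j : Fin Γ, (-Complex.I) • B j) 0 := by
    refine HasDerivAt.congr_of_eventuallyEq hP (Filter.Eventually.of_forall fun h => ?_)
    beta_reduce
    rw [hmap]
  have h := (overlapCLM v ψ).hasFDerivAt.comp_hasDerivAt 0 hP'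
  exact h

end MatAux

/-- Replacing the exact imaginary-time evolution by the rescaled unitary
circuit does not change the first derivative at `h = 0` of the logarithm of the magnitude
of the overlap with any vector `v` satisfying `⟨v, ψ⟩ ≠ 0`. -/
theorem log_abs_overlap_first_order_agreement
    (n Γ : ℕ) (ψ : Fin n → ℂ) (hψ : star ψ ⬝ᵥ ψ = 1)
    (H : Fin Γ → Matrix (Fin n) (Fin n) ℂ) (hH : ∀ j, (H j).IsHermitian)
    (B : Fin Γ → Matrix (Fin n) (Fin n) ℂ) (hB : ∀ j, (B j).IsHermitian)
    (hBψ : ∀ j, (B j).mulVec ψ =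
      (-Complex.I) • ((H j).mulVec ψ - (star ψ ⬝ᵥ (H j).mulVec ψ) • ψ))
    (c : Fin Γ → ℝ → ℝ)
    (hc : ∀ j h, c j h =
      Real.sqrt ((star ψ ⬝ᵥ (NormedSpace.exp ((-(2 * h : ℝ) : ℂ) • H j)).mulVec ψ).re))
    (v : Fin n → ℂ) (hv : star v ⬝ᵥ ψ ≠ 0) :
    DifferentiableAt ℝ
        (fun h : ℝ => Real.log (norm
          (star v ⬝ᵥ (NormedSpace.exp ((-(h : ℝ) : ℂ) • ∑ j : Fin Γ, H j)).mulVec ψ))) 0 ∧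
      DifferentiableAt ℝ
        (fun h : ℝ => Real.log (norm
          (((∏ j : Fin Γ, c j h : ℝ) : ℂ) *
            (star v ⬝ᵥ ((List.ofFn fun j : Fin Γ =>
              NormedSpace.exp ((-(Complex.I * (h : ℂ))) • B j)).prod.mulVec ψ))))) 0 ∧
      deriv (fun h : ℝ => Real.log (norm
          (star v ⬝ᵥ (NormedSpace.exp ((-(h : ℝ) : ℂ) • ∑ j : Fin Γ, H j)).mulVec ψ))) 0 =
        deriv (fun h : ℝ => Real.log (norm
          (((∏ j : Fin Γ, c j h : ℝ) : ℂ) *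
            (star v ⬝ᵥ ((List.ofFn fun j : Fin Γ =>
              NormedSpace.exp ((-(Complex.I * (h : ℂ))) • B j)).prod.mulVec ψ))))) 0 := by
  have hdotsum : ∀ (u : Fin n → ℂ) (f : Fin Γ → (Fin n → ℂ)) (s : Finset (Fin Γ)),
      u ⬝ᵥ (∑ j ∈ s, f j) = ∑ j ∈ s, u ⬝ᵥ f j := by
    intro u f s
    induction s using Finset.cons_induction with
    | empty => simp
    | cons a s ha ih => rw [Finset.sum_cons, Finset.sum_cons, dotProduct_add, ih]
  have hmvsum : ∀ (M : Fin Γ → Matrix (Fin n) (Fin n) ℂ) (s : Finset (Fin Γ)),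
      (∑ j ∈ s, M j).mulVec ψ = ∑ j ∈ s, (M j).mulVec ψ := by
    intro M s
    induction s using Finset.cons_induction with
    | empty => simp [Matrix.zero_mulVec]
    | cons a s ha ih => rw [Finset.sum_cons, Finset.sum_cons, Matrix.add_mulVec, ih]
  set w : ℂ := star v ⬝ᵥ ψ with hw
  -- α j is real
  have hαR : ∀ j, (((star ψ ⬝ᵥ (H j).mulVec ψ)).re : ℂ) = star ψ ⬝ᵥ (H j).mulVec ψ := by
    intro j
    rw [← Complex.conj_eq_iff_re]
    have h1 : star ψ ⬝ᵥ (H j).mulVec ψ = star ((star ((H j).mulVec ψ)) ⬝ᵥ ψ) :=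
      Matrix.star_dotProduct _ _
    calc (starRingEnd ℂ) (star ψ ⬝ᵥ (H j).mulVec ψ)
        = star ((H j).mulVec ψ) ⬝ᵥ ψ := by rw [h1]; simp
      _ = (star ψ ᵥ* (H j)ᴴ) ⬝ᵥ ψ := by rw [Matrix.star_mulVec]
      _ = star ψ ⬝ᵥ ((H j)ᴴ).mulVec ψ := (Matrix.dotProduct_mulVec _ _ _).symm
      _ = star ψ ⬝ᵥ (H j).mulVec ψ := by rw [(hH j).eq]
  -- the ITE side
  set d : ℂ := star v ⬝ᵥ (-(∑ j : Fin Γ, H j)).mulVec ψ with hd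
  have hf1 : HasDerivAt (fun h : ℝ => star v ⬝ᵥ
      (NormedSpace.exp ((-(h : ℝ) : ℂ) • ∑ j : Fin Γ, H j)).mulVec ψ) d 0 := by
    have heq : (fun h : ℝ => star v ⬝ᵥ
        (NormedSpace.exp ((-(h : ℝ) : ℂ) • ∑ j : Fin Γ, H j)).mulVec ψ) =
        fun h : ℝ => star v ⬝ᵥ
        (NormedSpace.exp ((h : ℂ) • (-(∑ j : Fin Γ, H j)))).mulVec ψ := by
      funext h
      congr 2
      rw [smul_neg, ← neg_smul]
    rw [heq]
    exact hasDerivAt_overlap v ψ _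
  have hf10 : (fun h : ℝ => star v ⬝ᵥ
      (NormedSpace.exp ((-(h : ℝ) : ℂ) • ∑ j : Fin Γ, H j)).mulVec ψ) 0 = w := by
    simp [NormedSpace.exp_zero, Matrix.one_mulVec, hw]
  -- the c_j derivatives
  have hre0 : ∀ j, (star ψ ⬝ᵥ
      (NormedSpace.exp ((-(2 * (0:ℝ) : ℝ) : ℂ) • H j)).mulVec ψ).re = 1 := by
    intro j
    norm_num [NormedSpace.exp_zero, Matrix.one_mulVec, hψ]
  have hφ : ∀ j, HasDerivAt (fun h : ℝ => (star ψ ⬝ᵥ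
      (NormedSpace.exp ((-(2 * h : ℝ) : ℂ) • H j)).mulVec ψ).re)
      (-(2 * (star ψ ⬝ᵥ (H j).mulVec ψ).re)) 0 := by
    intro j
    have h1 : HasDerivAt (fun h : ℝ => star ψ ⬝ᵥ
        (NormedSpace.exp ((-(2 * h : ℝ) : ℂ) • H j)).mulVec ψ)
        (star ψ ⬝ᵥ (((-2 : ℂ)) • H j).mulVec ψ) 0 := by
      have heq : (fun h : ℝ => star ψ ⬝ᵥ
          (NormedSpace.exp ((-(2 * h : ℝ) : ℂ) • H j)).mulVec ψ) =
          fun h : ℝ => star ψ ⬝ᵥ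
          (NormedSpace.exp ((h : ℂ) • ((-2 : ℂ) • H j))).mulVec ψ := by
        funext h
        congr 2
        rw [smul_smul]
        congr 1
        push_cast
        ring
      rw [heq]
      exact hasDerivAt_overlap ψ ψ _
    have h2 := Complex.reCLM.hasFDerivAt.comp_hasDerivAt 0 h1
    have h3 : star ψ ⬝ᵥ (((-2 : ℂ)) • H j).mulVec ψ =
        (-2 : ℂ) * (star ψ ⬝ᵥ (H j).mulVec ψ) := by
      rw [Matrix.smul_mulVec, dotProduct_smul, smul_eq_mul]
    rw [h3] at h2
    refine h2.congr_deriv ?_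
    simp [Complex.mul_re]
  have hc0 : ∀ j, c j 0 = 1 := by
    intro j
    rw [hc j 0, hre0 j, Real.sqrt_one]
  have hcj : ∀ j, HasDerivAt (c j) (-(star ψ ⬝ᵥ (H j).mulVec ψ).re) 0 := by
    intro j
    have hcfun : c j = fun h => Real.sqrt ((star ψ ⬝ᵥ
        (NormedSpace.exp ((-(2 * h : ℝ) : ℂ) • H j)).mulVec ψ).re) :=
      funext fun h => hc j h
    have hpt : HasDerivAt Real.sqrt (1 / (2 * Real.sqrt 1))
        ((fun h : ℝ => (star ψ ⬝ᵥ
          (NormedSpace.exp ((-(2 * h : ℝ) : ℂ) • H j)).mulVec ψ).re) 0) := by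
      rw [show ((fun h : ℝ => (star ψ ⬝ᵥ
          (NormedSpace.exp ((-(2 * h : ℝ) : ℂ) • H j)).mulVec ψ).re) 0) = 1 from hre0 j]
      exact Real.hasDerivAt_sqrt one_ne_zero
    have hcomp := hpt.comp 0 (hφ j)
    rw [hcfun]
    refine hcomp.congr_deriv ?_
    rw [Real.sqrt_one]
    ring
  -- product of c
  have hcprod : HasDerivAt (fun h : ℝ => ∏ j : Fin Γ, c j h)
      (∑ j : Fin Γ, -(star ψ ⬝ᵥ (H j).mulVec ψ).re) 0 := by
    have h1 := HasDerivAt.fun_finsetProd (u := Finset.univ) (f := fun j => c j)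
      (f' := fun j => -(star ψ ⬝ᵥ (H j).mulVec ψ).re) (x := (0:ℝ)) (fun j _ => hcj j)
    refine h1.congr_deriv ?_
    refine Finset.sum_congr rfl fun j _ => ?_
    rw [show (∏ i ∈ Finset.univ.erase j, c i 0) = 1 from
      Finset.prod_eq_one fun i _ => hc0 i]
    simp
  -- the circuit overlap
  have hg2 := hasDerivAt_overlap_listProd v ψ B
  have hg20 : star v ⬝ᵥ ((List.ofFn fun j : Fin Γ =>
      NormedSpace.exp ((-(Complex.I * ((0:ℝ) : ℂ))) • B j)).prod.mulVec ψ) = w := by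
    simp [NormedSpace.exp_zero, List.prod_ofFn, Matrix.one_mulVec, hw]
  -- combined second function
  have hg1 : HasDerivAt (fun h : ℝ => ((∏ j : Fin Γ, c j h : ℝ) : ℂ))
      (((∑ j : Fin Γ, -(star ψ ⬝ᵥ (H j).mulVec ψ).re : ℝ) : ℂ)) 0 :=
    Complex.ofRealCLM.hasFDerivAt.comp_hasDerivAt 0 hcprod
  have hv1 : ((∏ j : Fin Γ, c j (0:ℝ) : ℝ) : ℂ) = 1 := by
    rw [show (∏ j : Fin Γ, c j (0:ℝ)) = 1 from Finset.prod_eq_one fun i _ => hc0 i]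
    norm_num
  have hf2 : HasDerivAt (fun h : ℝ => ((∏ j : Fin Γ, c j h : ℝ) : ℂ) *
      (star v ⬝ᵥ ((List.ofFn fun j : Fin Γ =>
        NormedSpace.exp ((-(Complex.I * (h : ℂ))) • B j)).prod.mulVec ψ))) d 0 := by
    have h1 := hg1.mul hg2
    rw [hv1, hg20] at h1
    refine h1.congr_deriv ?_
    -- d = S * w + 1 * D2
    have hD2 : star v ⬝ᵥ (∑ j : Fin Γ, (-Complex.I) • B j).mulVec ψ =
        (∑ j : Fin Γ, star ψ ⬝ᵥ (H j).mulVec ψ) * w -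
          star v ⬝ᵥ (∑ j : Fin Γ, H j).mulVec ψ := by
      have hsmv : (∑ j : Fin Γ, (-Complex.I) • B j).mulVec ψ =
          ∑ j : Fin Γ, ((star ψ ⬝ᵥ (H j).mulVec ψ) • ψ - (H j).mulVec ψ) := by
        rw [hmvsum]
        refine Finset.sum_congr rfl fun j _ => ?_
        rw [Matrix.smul_mulVec, hBψ j, smul_smul]
        rw [show (-Complex.I) * (-Complex.I) = -1 by
          rw [neg_mul_neg, Complex.I_mul_I]]
        simp [neg_sub]
      rw [hsmv, hdotsum, hmvsum, hdotsum, Finset.sum_mul, ← Finset.sum_sub_distrib]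
      refine Finset.sum_congr rfl fun j _ => ?_
      rw [dotProduct_sub, dotProduct_smul, smul_eq_mul, hw]
    rw [hD2, hd]
    have hS : ((∑ j : Fin Γ, -(star ψ ⬝ᵥ (H j).mulVec ψ).re : ℝ) : ℂ) =
        -∑ j : Fin Γ, star ψ ⬝ᵥ (H j).mulVec ψ := by
      push_cast
      rw [Finset.sum_neg_distrib]
      congr 1
      exact Finset.sum_congr rfl fun j _ => hαR j
    rw [hS]
    rw [Matrix.neg_mulVec, dotProduct_neg]
    ring
  -- final assembly
  have hfin1 := hasDerivAt_log_abs_aux hv hf10 hf1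
  have hf20 : (fun h : ℝ => ((∏ j : Fin Γ, c j h : ℝ) : ℂ) *
      (star v ⬝ᵥ ((List.ofFn fun j : Fin Γ =>
        NormedSpace.exp ((-(Complex.I * (h : ℂ))) • B j)).prod.mulVec ψ))) 0 = w := by
    show ((∏ j : Fin Γ, c j (0:ℝ) : ℝ) : ℂ) *
      (star v ⬝ᵥ ((List.ofFn fun j : Fin Γ =>
        NormedSpace.exp ((-(Complex.I * ((0:ℝ) : ℂ))) • B j)).prod.mulVec ψ)) = w
    rw [hv1, one_mul, hg20]
  have hfin2 := hasDerivAt_log_abs_aux hv hf20 hf2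
  exact ⟨hfin1.differentiableAt, hfin2.differentiableAt, by rw [hfin1.deriv, hfin2.deriv]⟩
end
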